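/- Convolution property of the dual photography transform: for f ∈ S(ℝ²ⁿ) and g ∈ S(ℝ × ℝⁿ) (with suitable integrability in α), (P*g) * f = P*(g * Pf), where P*g(x,u) = ∫_ℝ g(α, αx + (1-α)u) dα, the convolution on the left is over ℝ²ⁿ, and the convolution inside P* is over the second (ℝⁿ) variable: (g * Pf)(α, x̄) = ∫_{ℝⁿ} g(α, x̄ - x̄') Pf(α, x̄') dx̄'. -/

import Mathlib

open MeasureTheory SchwartzMap FourierTransform Real

noncomputable section

abbrev En (n : ℕ) := EuclideanSpace ℝ (Fin n)
abbrev E2n (n : ℕ) := WithLp 2 (En n × En n)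

instance (n : ℕ) : MeasureSpace (E2n n) :=
  ⟨Measure.map (WithLp.toLp 2) (volume : Measure (En n × En n))⟩
instance (n : ℕ) : BorelSpace (E2n n) := inferInstance

/-- The photography transform `P`. -/
def photo (n : ℕ) (f : E2n n → ℂ) (α : ℝ) (x : En n) : ℂ :=
  (|α| ^ n)⁻¹ • ∫ u : En n, f (WithLp.toLp 2 (α⁻¹ • x + (1 - α⁻¹) • u, u))
/-- The dual photography transform `P*`. -/
def photoDual (n : ℕ) (h : ℝ → En n → ℂ) : E2n n → ℂ :=
  fun z => ∫ α : ℝ, h α (α • z.fst + (1 - α) • z.snd)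

/-! ### Auxiliary material -/

lemma volume_E2n_eq (n : ℕ) :
    (volume : Measure (E2n n)) = @volume (E2n n) measureSpaceOfInnerProductSpace :=
  (WithLp.volume_preserving_toLp (En n) (En n)).map_eq

lemma measurableEmbedding_toLp_E2n (n : ℕ) :
    MeasurableEmbedding (WithLp.toLp 2 : En n × En n → E2n n) :=
  (MeasurableEquiv.toLp 2 (En n × En n)).measurableEmbedding

instance sigmaFiniteE2n (n : ℕ) : SigmaFinite (volume : Measure (E2n n)) := by
  rw [volume_E2n_eq]; infer_instance

instance haarE2n (n : ℕ) : Measure.IsAddHaarMeasure (volume : Measure (E2n n)) := by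
  rw [volume_E2n_eq]; infer_instance

instance secondCountableE2n (n : ℕ) : SecondCountableTopology (E2n n) :=
  inferInstance

instance temperateE2n (n : ℕ) : Measure.HasTemperateGrowth (volume : Measure (E2n n)) :=
  MeasureTheory.Measure.IsAddHaarMeasure.instHasTemperateGrowth

lemma norm_snd_le_E2n {n : ℕ} (p : E2n n) : ‖p.snd‖ ≤ ‖p‖ := by
  have h := WithLp.prod_norm_eq_of_L2 p
  nlinarith [Real.sq_sqrt (show (0:ℝ) ≤ ‖p.fst‖^2 + ‖p.snd‖^2 by positivity),
    Real.sqrt_nonneg (‖p.fst‖^2 + ‖p.snd‖^2), norm_nonneg p.snd, norm_nonneg p.fst, h]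

lemma schwartz_decay' {E : Type*} [NormedAddCommGroup E] [NormedSpace ℝ E] (f : 𝓢(E, ℂ)) (k : ℕ) :
    ∃ C : ℝ, 0 ≤ C ∧ ∀ x, ‖f x‖ ≤ C * (1 + ‖x‖) ^ (-(k : ℝ)) := by
  refine ⟨2 ^ k * (Finset.Iic ((k : ℕ), (0 : ℕ))).sup
      (fun m => SchwartzMap.seminorm ℝ m.1 m.2) f, by positivity, fun x => ?_⟩
  have h := one_add_le_sup_seminorm_apply (𝕜 := ℝ) (m := (k, 0)) le_rfl le_rfl f x
  rw [norm_iteratedFDeriv_zero] at h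
  have hpos : (0 : ℝ) < (1 + ‖x‖) ^ k := by positivity
  rw [Real.rpow_neg (by positivity), Real.rpow_natCast, ← div_eq_mul_inv, le_div_iff₀ hpos]
  linarith [h]

lemma rpow_neg_antitone {a b : ℝ} (r : ℝ) (ha : 0 < a) (hab : a ≤ b) (hr : r ≤ 0) :
    b ^ r ≤ a ^ r :=
  Real.rpow_le_rpow_of_nonpos ha hab hr

set_option maxHeartbeats 2000000 in
set_option synthInstance.maxHeartbeats 400000 in
/-- convolution property of the dual photography transform:
`(P*g) * f = P*(g * Pf)`. -/
theorem photoDual_convolution (n : ℕ) (f : 𝓢(E2n n, ℂ)) (g : 𝓢(ℝ × En n, ℂ))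
    (z : E2n n) :
    ∫ w : E2n n, photoDual n (fun α y => g (α, y)) (z - w) * f w =
      photoDual n
        (fun α y => ∫ y' : En n, g (α, y - y') * photo n (⇑f) α y') z := by
  -- decay bounds
  obtain ⟨Ca, hCa0, hCa⟩ := schwartz_decay' g 2
  have hga : ∀ (α : ℝ) (y : En n), ‖g (α, y)‖ ≤ Ca * (1 + ‖α‖) ^ (-(2:ℝ)) := by
    intro α y
    refine (hCa (α, y)).trans (mul_le_mul_of_nonneg_left ?_ hCa0)
    refine rpow_neg_antitone _ (by positivity) ?_ (by norm_num)
    have h1 : ‖α‖ ≤ ‖((α, y) : ℝ × En n)‖ := norm_fst_le ((α, y) : ℝ × En n)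
    linarith
  obtain ⟨Cy, hCy0, hCy⟩ := schwartz_decay' g (n + 1)
  have hgy : ∀ (α : ℝ) (y : En n), ‖g (α, y)‖ ≤ Cy * (1 + ‖y‖) ^ (-((n:ℝ) + 1)) := by
    intro α y
    have h := hCy (α, y)
    rw [show ((((n:ℕ) + 1 : ℕ)):ℝ) = (n:ℝ) + 1 by push_cast; ring] at h
    refine h.trans (mul_le_mul_of_nonneg_left ?_ hCy0)
    refine rpow_neg_antitone _ (by positivity) ?_
      (by linarith [show (0:ℝ) ≤ (n:ℝ) from Nat.cast_nonneg n])
    have h1 : ‖y‖ ≤ ‖((α, y) : ℝ × En n)‖ := norm_snd_le ((α, y) : ℝ × En n)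
    linarith
  obtain ⟨Cf, hCf0, hCf⟩ := schwartz_decay' f (n + 1)
  have hfu : ∀ p : E2n n, ‖f p‖ ≤ Cf * (1 + ‖p.snd‖) ^ (-((n:ℝ) + 1)) := by
    intro p
    have h := hCf p
    rw [show ((((n:ℕ) + 1 : ℕ)):ℝ) = (n:ℝ) + 1 by push_cast; ring] at h
    refine h.trans (mul_le_mul_of_nonneg_left ?_ hCf0)
    refine rpow_neg_antitone _ (by positivity) ?_
      (by linarith [show (0:ℝ) ≤ (n:ℝ) from Nat.cast_nonneg n])
    linarith [norm_snd_le_E2n p]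
  obtain ⟨C0, hC00, hC0b⟩ := schwartz_decay' g 0
  have hg0 : ∀ p : ℝ × En n, ‖g p‖ ≤ C0 := by
    intro p
    simpa using hC0b p
  -- integrable kernels
  have hIk : Integrable (fun y : En n => (1 + ‖y‖) ^ (-((n:ℝ) + 1))) := by
    apply integrable_one_add_norm
    rw [finrank_euclideanSpace_fin]
    linarith
  have hIa : Integrable (fun α : ℝ => (1 + ‖α‖) ^ (-(2:ℝ))) := by
    apply integrable_one_add_norm
    simp [Module.finrank_self]
  -- continuity helpers
  have hfst : Continuous fun w : E2n n => w.fst :=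
    continuous_fst.comp (WithLp.prodContinuousLinearEquiv 2 ℝ (En n) (En n)).continuous
  have hsnd : Continuous fun w : E2n n => w.snd :=
    continuous_snd.comp (WithLp.prodContinuousLinearEquiv 2 ℝ (En n) (En n)).continuous
  have hE2 : Continuous fun p : En n × En n => (WithLp.toLp 2 p : E2n n) :=
    (WithLp.prodContinuousLinearEquiv 2 ℝ (En n) (En n)).symm.continuous
  -- the main Fubini integrability
  have hA : Integrable (Function.uncurry fun (w : E2n n) (α : ℝ) =>
      g (α, α • (z.fst - w.fst) + (1 - α) • (z.snd - w.snd)) * f w)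
      ((volume : Measure (E2n n)).prod (volume : Measure ℝ)) := by
    have hcont : Continuous fun p : E2n n × ℝ =>
        g (p.2, p.2 • (z.fst - p.1.fst) + (1 - p.2) • (z.snd - p.1.snd)) * f p.1 := by
      refine Continuous.mul (g.continuous.comp ?_) (f.continuous.comp continuous_fst)
      exact continuous_snd.prodMk
        ((continuous_snd.smul (continuous_const.sub (hfst.comp continuous_fst))).add
          ((continuous_const.sub continuous_snd).smul
            (continuous_const.sub (hsnd.comp continuous_fst))))
    refine Integrable.mono' (f.integrable.norm.mul_prod (hIa.const_mul Ca))
      hcont.aestronglyMeasurable ?_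
    filter_upwards with p
    rw [Function.uncurry_apply_pair, norm_mul, mul_comm]
    exact mul_le_mul_of_nonneg_left (hga _ _) (norm_nonneg _)
  -- the key pointwise-in-α identity, for α ≠ 0
  have key : ∀ (α : ℝ), α ≠ 0 →
      (∫ w : E2n n, g (α, α • (z.fst - w.fst) + (1 - α) • (z.snd - w.snd)) * f w) =
      ∫ y' : En n, g (α, (α • z.fst + (1 - α) • z.snd) - y') * photo n (⇑f) α y' := by
    intro α hα
    set X : En n := α • z.fst + (1 - α) • z.snd with hX
    have hB : Integrable (Function.uncurry fun (y' : En n) (u : En n) =>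
        g (α, X - y') * f (WithLp.toLp 2 (α⁻¹ • y' + (1 - α⁻¹) • u, u)))
        ((volume : Measure (En n)).prod (volume : Measure (En n))) := by
      have hcont : Continuous fun p : En n × En n =>
          g (α, X - p.1) * f (WithLp.toLp 2 (α⁻¹ • p.1 + (1 - α⁻¹) • p.2, p.2)) := by
        refine Continuous.mul (g.continuous.comp ?_) (f.continuous.comp (hE2.comp ?_))
        · exact continuous_const.prodMk (continuous_const.sub continuous_fst)
        · fun_prop
      refine Integrable.mono' (((hIk.const_mul Cy).comp_sub_left X).mul_prod
        (hIk.const_mul Cf)) hcont.aestronglyMeasurable ?_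
      filter_upwards with p
      rw [Function.uncurry_apply_pair, norm_mul]
      exact mul_le_mul (hgy _ _) (hfu _) (norm_nonneg _) (by positivity)
    have hC : Integrable (fun w : En n × En n =>
        g (α, α • (z.fst - w.1) + (1 - α) • (z.snd - w.2)) * f (WithLp.toLp 2 (w.1, w.2)))
        ((volume : Measure (En n)).prod (volume : Measure (En n))) := by
      have hcont : Continuous fun w : En n × En n =>
          g (α, α • (z.fst - w.1) + (1 - α) • (z.snd - w.2)) * f (WithLp.toLp 2 (w.1, w.2)) := by
        refine Continuous.mul (g.continuous.comp ?_) (f.continuous.comp (hE2.comp ?_))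
        · fun_prop
        · exact continuous_fst.prodMk continuous_snd
      have hfi0 : Integrable (⇑f) (volume : Measure (E2n n)) := f.integrable
      have hfi : Integrable (fun w : En n × En n => f (WithLp.toLp 2 (w.1, w.2)))
          ((volume : Measure (En n)).prod (volume : Measure (En n))) :=
          (measurableEmbedding_toLp_E2n n).integrable_map_iff.1 hfi0
      refine Integrable.mono' (hfi.norm.const_mul C0) hcont.aestronglyMeasurable ?_
      filter_upwards with w
      rw [norm_mul]
      exact mul_le_mul (hg0 _) le_rfl (norm_nonneg _) (by positivity)
    calc ∫ w : E2n n, g (α, α • (z.fst - w.fst) + (1 - α) • (z.snd - w.snd)) * f w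
        = ∫ w : En n × En n,
            g (α, α • (z.fst - w.1) + (1 - α) • (z.snd - w.2)) * f (WithLp.toLp 2 (w.1, w.2)) :=
          (measurableEmbedding_toLp_E2n n).integral_map (μ := (volume : Measure (En n × En n))) _
      _ = ∫ u : En n, ∫ w₁ : En n,
            g (α, α • (z.fst - w₁) + (1 - α) • (z.snd - u)) * f (WithLp.toLp 2 (w₁, u)) :=
          integral_prod_symm _ hC
      _ = ∫ u : En n, |(α ^ n)⁻¹| • ∫ y' : En n,
            g (α, X - y') * f (WithLp.toLp 2 (α⁻¹ • y' + (1 - α⁻¹) • u, u)) := by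
          refine integral_congr_ae (Filter.Eventually.of_forall fun u => ?_)
          dsimp only
          have hpt : ∀ w₁ : En n,
              g (α, α • (z.fst - w₁) + (1 - α) • (z.snd - u)) * f (WithLp.toLp 2 (w₁, u)) =
              (fun y : En n => g (α, X - y) *
                f (WithLp.toLp 2 (α⁻¹ • y + (1 - α⁻¹) • u, u))) (α • w₁ + (1 - α) • u) := by
            intro w₁
            have hv1 : X - (α • w₁ + (1 - α) • u) =
                α • (z.fst - w₁) + (1 - α) • (z.snd - u) := by
              rw [hX, smul_sub, smul_sub]; abel
            have hv2 : α⁻¹ • (α • w₁ + (1 - α) • u) + (1 - α⁻¹) • u = w₁ := by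
              rw [smul_add, smul_smul, inv_mul_cancel₀ hα, one_smul, smul_smul,
                add_assoc, ← add_smul]
              have h0 : α⁻¹ * (1 - α) + (1 - α⁻¹) = 0 := by field_simp; ring
              rw [h0, zero_smul, add_zero]
            simp only [hv1, hv2]
          rw [integral_congr_ae (Filter.Eventually.of_forall hpt)]
          have hcs := MeasureTheory.Measure.integral_comp_smul (μ := (volume : Measure (En n)))
            (fun y : En n => (fun y : En n => g (α, X - y) *
              f (WithLp.toLp 2 (α⁻¹ • y + (1 - α⁻¹) • u, u))) (y + (1 - α) • u)) α
          rw [finrank_euclideanSpace_fin] at hcs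
          calc ∫ w₁ : En n, (fun y : En n => g (α, X - y) *
                f (WithLp.toLp 2 (α⁻¹ • y + (1 - α⁻¹) • u, u))) (α • w₁ + (1 - α) • u)
              = ∫ w₁ : En n, (fun y : En n => (fun y : En n => g (α, X - y) *
                  f (WithLp.toLp 2 (α⁻¹ • y + (1 - α⁻¹) • u, u))) (y + (1 - α) • u)) (α • w₁) := rfl
            _ = |(α ^ n)⁻¹| • ∫ y : En n, (fun y : En n => g (α, X - y) *
                  f (WithLp.toLp 2 (α⁻¹ • y + (1 - α⁻¹) • u, u))) (y + (1 - α) • u) := hcs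
            _ = |(α ^ n)⁻¹| • ∫ y : En n, g (α, X - y) *
                  f (WithLp.toLp 2 (α⁻¹ • y + (1 - α⁻¹) • u, u)) := by
                refine congrArg (fun t => |(α ^ n)⁻¹| • t) ?_
                exact integral_add_right_eq_self (μ := (volume : Measure (En n)))
                  (fun y : En n => g (α, X - y) * f (WithLp.toLp 2 (α⁻¹ • y + (1 - α⁻¹) • u, u)))
                  ((1 - α) • u)
      _ = |(α ^ n)⁻¹| • ∫ u : En n, ∫ y' : En n,
            g (α, X - y') * f (WithLp.toLp 2 (α⁻¹ • y' + (1 - α⁻¹) • u, u)) := integral_smul _ _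
      _ = |(α ^ n)⁻¹| • ∫ y' : En n, ∫ u : En n,
            g (α, X - y') * f (WithLp.toLp 2 (α⁻¹ • y' + (1 - α⁻¹) • u, u)) := by
          rw [integral_integral_swap hB]
      _ = |(α ^ n)⁻¹| • ∫ y' : En n,
            g (α, X - y') * ∫ u : En n, f (WithLp.toLp 2 (α⁻¹ • y' + (1 - α⁻¹) • u, u)) := by
          refine congrArg _ (integral_congr_ae (Filter.Eventually.of_forall fun y' => ?_))
          exact integral_const_mul _ _
      _ = ∫ y' : En n, g (α, X - y') * photo n (⇑f) α y' := by
          rw [show |(α ^ n)⁻¹| = (|α| ^ n)⁻¹ by rw [abs_inv, abs_pow]]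
          simp_rw [photo, mul_smul_comm]
          rw [integral_smul]
  -- a.e. α ≠ 0
  have h0 : ∀ᵐ (α : ℝ), α ≠ 0 := by
    filter_upwards [compl_mem_ae_iff.2 (measure_singleton (0:ℝ))] with α hα
    simpa using hα
  calc ∫ w : E2n n, photoDual n (fun α y => g (α, y)) (z - w) * f w
      = ∫ w : E2n n, ∫ α : ℝ,
          g (α, α • (z.fst - w.fst) + (1 - α) • (z.snd - w.snd)) * f w := by
        refine integral_congr_ae (Filter.Eventually.of_forall fun w => ?_)
        simp only [photoDual]
        rw [← integral_mul_const]
        rfl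
    _ = ∫ α : ℝ, ∫ w : E2n n,
          g (α, α • (z.fst - w.fst) + (1 - α) • (z.snd - w.snd)) * f w :=
        integral_integral_swap hA
    _ = ∫ α : ℝ, ∫ y' : En n,
          g (α, (α • z.fst + (1 - α) • z.snd) - y') * photo n (⇑f) α y' := by
        refine integral_congr_ae ?_
        filter_upwards [h0] with α hα
        exact key α hα
    _ = photoDual n
          (fun α y => ∫ y' : En n, g (α, y - y') * photo n (⇑f) α y') z := rfl
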